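/- For 1 ≤ r ≤ s and m ≥ k_r + 1, the weight of permutations using at most r−1 selections satisfies T_{≤r−1}(m, k₁,…,k_r) = (P_{m−1})! · θ^{m−k_r} · P_{k_r} + (P_{m−1})! · Σ_{i=k_r}^{m−1} (T_{≤r−2}(i, k₁,…,k_{r−1}) / (P_i)!) · θ^{m−1−i}. -/

import Mathlib

open Finset

/-- Number of inversions (Kendall tau statistic) of a permutation. -/
def inversions {N : ℕ} (π : Equiv.Perm (Fin N)) : ℕ :=
  (Finset.univ.filter (fun x : Fin N × Fin N => x.1 < x.2 ∧ π x.2 < π x.1)).card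

/-- `P_k(θ) = 1 + θ + … + θ^(k-1)`. -/
def mallowsP (θ : ℝ) (k : ℕ) : ℝ := ∑ i ∈ Finset.range k, θ ^ i

/-- `(P_k)! = P_k · P_(k-1) · … · P_1`. -/
def mallowsPFact (θ : ℝ) (k : ℕ) : ℝ := ∏ j ∈ Finset.range k, mallowsP θ (j + 1)

/-- Positions (0-indexed) selected by the multi-threshold strategy: for each
threshold `k` in the list, the next selection is at the first position `p` with
`p ≥ k` (i.e. the first `k` candidates are rejected), `p ≥ lo` (after the previous
selection), and `p` a left-to-right maximum. -/
def selList {N : ℕ} (π : Equiv.Perm (Fin N)) : List ℕ → ℕ → List (Fin N)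
  | [], _ => []
  | k :: ks, lo =>
    let s : Finset (Fin N) := Finset.univ.filter
      (fun p => max k lo ≤ (p : ℕ) ∧ ∀ q : Fin N, q < p → π q < π p)
    if h : s.Nonempty then s.min' h :: selList π ks ((s.min' h : ℕ) + 1) else []

/-- The strategy wins on `π` if the position holding the largest value is selected. -/
def winnable {N : ℕ} (π : Equiv.Perm (Fin N)) (ks : List ℕ) : Prop :=
  ∃ p ∈ selList π ks 0, ∀ q : Fin N, π q ≤ π p

instance {N : ℕ} (π : Equiv.Perm (Fin N)) (ks : List ℕ) : Decidable (winnable π ks) :=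
  inferInstanceAs (Decidable (∃ p ∈ selList π ks 0, ∀ q : Fin N, π q ≤ π p))

/-- `W(N, k₁, …, k_s) = Σ_(winnable π ∈ S_N) θ^(c(π))`. -/
def winW (θ : ℝ) (N : ℕ) (ks : List ℕ) : ℝ :=
  ∑ π : Equiv.Perm (Fin N), if winnable π ks then θ ^ inversions π else 0

/-- `T_{≤j}(m, k₁, …, k_r)`: weight of permutations of `S_m` on which the strategy
makes at most `j` selections (with `j : ℤ`, so `T_{≤-1} = 0`). -/
def Tle (θ : ℝ) (m : ℕ) (ks : List ℕ) (j : ℤ) : ℝ :=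
  ∑ π : Equiv.Perm (Fin m),
    if ((selList π ks 0).length : ℤ) ≤ j then θ ^ inversions π else 0

/-- `T_j(m, k₁, …, k_r)`: weight of permutations of `S_m` on which the strategy
makes exactly `j` selections. -/
def Texact (θ : ℝ) (m : ℕ) (ks : List ℕ) (j : ℕ) : ℝ :=
  ∑ π : Equiv.Perm (Fin m),
    if (selList π ks 0).length = j then θ ^ inversions π else 0


section Stmt8Aux
open Fin
variable {n : ℕ}

def Fp (v : Fin (n+1)) (ρ : Equiv.Perm (Fin n)) : Equiv.Perm (Fin (n+1)) :=
  finSuccEquivLast.trans (ρ.optionCongr.trans (finSuccEquiv' v).symm)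

@[simp] lemma Fp_last (v : Fin (n+1)) (ρ : Equiv.Perm (Fin n)) : Fp v ρ (Fin.last n) = v := by
  simp [Fp]

@[simp] lemma Fp_castSucc (v : Fin (n+1)) (ρ : Equiv.Perm (Fin n)) (q : Fin n) :
    Fp v ρ (Fin.castSucc q) = v.succAbove (ρ q) := by
  simp [Fp]


lemma Fp_bij : Function.Bijective (fun x : Fin (n+1) × Equiv.Perm (Fin n) => Fp x.1 x.2) := by
  rw [Fintype.bijective_iff_injective_and_card]
  constructor
  · rintro ⟨v, ρ⟩ ⟨v', ρ'⟩ h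
    simp only at h
    have hv : v = v' := by
      have := congrArg (fun π : Equiv.Perm (Fin (n+1)) => π (Fin.last n)) h
      simpa using this
    subst hv
    have hρ : ρ = ρ' := by
      ext q
      have := congrArg (fun π : Equiv.Perm (Fin (n+1)) => π (Fin.castSucc q)) h
      simp only [Fp_castSucc] at this
      exact congrArg Fin.val (Fin.succAbove_right_injective this)
    rw [hρ]
  · simp [Fintype.card_perm, Nat.factorial_succ]

lemma card_le_val (v : Fin (n+1)) :
    (univ.filter fun b : Fin n => (v : ℕ) ≤ (b : ℕ)).card = n - v := by
  have h2 : (univ.filter fun b : Fin n => ((b : ℕ) < (v : ℕ))).card = (v : ℕ) := by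
    rw [← Fintype.card_subtype]
    have : Fintype.card {b : Fin n // (b : ℕ) < (v : ℕ)} = Fintype.card (Fin v) := by
      apply Fintype.card_congr
      exact { toFun := fun b => ⟨(b.1 : ℕ), b.2⟩
              invFun := fun i => ⟨⟨i, lt_of_lt_of_le i.2 (Fin.is_le v)⟩, i.2⟩
              left_inv := fun b => rfl
              right_inv := fun i => rfl }
    rw [this, Fintype.card_fin]
  have h0 := Finset.card_filter_add_card_filter_not
    (s := (univ : Finset (Fin n))) (p := fun b => (v : ℕ) ≤ (b : ℕ))
  simp only [not_le, card_univ, Fintype.card_fin] at h0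
  rw [h2] at h0
  omega



lemma inversions_Fp (v : Fin (n+1)) (ρ : Equiv.Perm (Fin n)) :
    inversions (Fp v ρ) = (n - v) + inversions ρ := by
  classical
  have hsplit := Finset.card_filter_add_card_filter_not
    (s := univ.filter (fun x : Fin (n+1) × Fin (n+1) => x.1 < x.2 ∧ Fp v ρ x.2 < Fp v ρ x.1))
    (p := fun x => x.2 = Fin.last n)
  rw [Finset.filter_filter, Finset.filter_filter] at hsplit
  have hA : (univ.filter fun x : Fin (n+1) × Fin (n+1) =>
      (x.1 < x.2 ∧ Fp v ρ x.2 < Fp v ρ x.1) ∧ x.2 = Fin.last n).card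
      = (univ.filter fun b : Fin n => (v : ℕ) ≤ (b : ℕ)).card := by
    apply Finset.card_bij'
      (i := fun x hx => ρ (x.1.castPred (by
        simp only [Finset.mem_filter] at hx
        exact Fin.ne_last_of_lt (hx.2.2 ▸ hx.2.1.1))))
      (j := fun b hb => (Fin.castSucc (ρ.symm b), Fin.last n))
    case hi =>
      intro x hx
      simp only [Finset.mem_filter, Finset.mem_univ, true_and] at hx ⊢
      obtain ⟨⟨h1, h2⟩, h3⟩ := hx
      rw [h3, Fp_last] at h2
      have hx1 : x.1 = Fin.castSucc (x.1.castPred (Fin.ne_last_of_lt (h3 ▸ h1))) :=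
        (Fin.castSucc_castPred _ _).symm
      rw [hx1, Fp_castSucc, Fin.lt_succAbove_iff_le_castSucc] at h2
      exact h2
    case hj =>
      intro b hb
      simp only [Finset.mem_filter, Finset.mem_univ, true_and] at hb ⊢
      refine ⟨⟨Fin.castSucc_lt_last _, ?_⟩, trivial⟩
      rw [Fp_last, Fp_castSucc, Equiv.apply_symm_apply, Fin.lt_succAbove_iff_le_castSucc]
      exact hb
    case left_inv =>
      intro x hx
      simp only [Finset.mem_filter] at hx
      have h3 := hx.2.2
      refine Prod.ext ?_ ?_
      · simp [Fin.castSucc_castPred]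
      · simp [h3]
    case right_inv =>
      intro b hb
      simp [Fin.castPred_castSucc]
  have hB : (univ.filter fun x : Fin (n+1) × Fin (n+1) =>
      (x.1 < x.2 ∧ Fp v ρ x.2 < Fp v ρ x.1) ∧ ¬ x.2 = Fin.last n).card = inversions ρ := by
    rw [inversions]
    symm
    apply Finset.card_bij'
      (i := fun a ha => (Fin.castSucc a.1, Fin.castSucc a.2))
      (j := fun x hx => (x.1.castPred (by
          simp only [Finset.mem_filter] at hx
          exact Fin.ne_last_of_lt (hx.2.1.1.trans (Fin.lt_last_iff_ne_last.mpr hx.2.2))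
        ), x.2.castPred (by
          simp only [Finset.mem_filter] at hx
          exact hx.2.2)))
    case hi =>
      intro a ha
      simp only [Finset.mem_filter, Finset.mem_univ, true_and] at ha ⊢
      refine ⟨⟨?_, ?_⟩, ?_⟩
      · exact Fin.castSucc_lt_castSucc_iff.mpr ha.1
      · rw [Fp_castSucc, Fp_castSucc]
        exact Fin.succAbove_lt_succAbove_iff.mpr ha.2
      · exact Fin.ne_of_lt (Fin.castSucc_lt_last _)
    case hj =>
      intro x hx
      simp only [Finset.mem_filter, Finset.mem_univ, true_and] at hx ⊢
      obtain ⟨⟨h1, h2⟩, h3⟩ := hx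
      constructor
      · rw [← Fin.castSucc_lt_castSucc_iff (n := n), Fin.castSucc_castPred, Fin.castSucc_castPred]
        exact h1
      · have e2 : x.2 = Fin.castSucc (x.2.castPred h3) := (Fin.castSucc_castPred _ _).symm
        have e1 : x.1 = Fin.castSucc (x.1.castPred (Fin.ne_last_of_lt
          (h1.trans (Fin.lt_last_iff_ne_last.mpr h3)))) := (Fin.castSucc_castPred _ _).symm
        rw [e2, e1, Fp_castSucc, Fp_castSucc] at h2
        exact Fin.succAbove_lt_succAbove_iff.mp h2
    case left_inv =>
      intro a ha
      refine Prod.ext ?_ ?_ <;> simp [Fin.castPred_castSucc]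
    case right_inv =>
      intro x hx
      refine Prod.ext ?_ ?_ <;> simp [Fin.castSucc_castPred]
  rw [inversions, ← hsplit, hA, hB, card_le_val]

lemma mallowsP_pos {θ : ℝ} (hθ : 0 < θ) (k : ℕ) : 0 < mallowsP θ (k + 1) := by
  apply Finset.sum_pos (fun i _ => pow_pos hθ i)
  exact Finset.nonempty_range_add_one

lemma mallowsPFact_pos {θ : ℝ} (hθ : 0 < θ) (k : ℕ) : 0 < mallowsPFact θ k :=
  Finset.prod_pos (fun j _ => mallowsP_pos hθ j)

lemma sum_theta_reflect (θ : ℝ) (n : ℕ) :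
    ∑ i ∈ Finset.range n, θ ^ (n - 1 - i) = mallowsP θ n := by
  rw [mallowsP]
  exact Finset.sum_range_reflect (fun i => θ ^ i) n

lemma sum_theta_all (θ : ℝ) (n : ℕ) :
    ∑ v : Fin (n+1), θ ^ (n - (v : ℕ)) = mallowsP θ (n+1) := by
  rw [Fin.sum_univ_eq_sum_range (fun i => θ ^ (n - i)) (n+1), ← sum_theta_reflect θ (n+1)]
  exact Finset.sum_congr rfl (fun i _ => by norm_num)

lemma sum_theta_cast (θ : ℝ) (n : ℕ) :
    ∑ v : Fin n, θ ^ (n - (Fin.castSucc v : ℕ)) = θ * mallowsP θ n := by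
  simp only [Fin.coe_castSucc]
  rw [Fin.sum_univ_eq_sum_range (fun i => θ ^ (n - i)) n]
  rw [← Finset.sum_range_reflect (fun i => θ ^ (n - i)) n]
  rw [mallowsP, Finset.mul_sum]
  apply Finset.sum_congr rfl
  intro i hi
  rw [Finset.mem_range] at hi
  have h2 : n - (n - 1 - i) = i + 1 := by omega
  rw [h2, pow_succ, mul_comm]

lemma sum_perm_pow (θ : ℝ) (n : ℕ) :
    (∑ π : Equiv.Perm (Fin n), θ ^ inversions π) = mallowsPFact θ n := by
  induction n with
  | zero => simp [inversions, mallowsPFact]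
  | succ n ih =>
    rw [← Fintype.sum_bijective _ Fp_bij _ (fun π => θ ^ inversions π) (fun x => rfl),
      Fintype.sum_prod_type]
    simp only [inversions_Fp, pow_add]
    simp only [← Finset.mul_sum]
    rw [← Finset.sum_mul, sum_theta_all, ih, mallowsPFact, mallowsPFact,
      Finset.prod_range_succ, mul_comm]

def stage {N : ℕ} (π : Equiv.Perm (Fin N)) (k lo : ℕ) : Finset (Fin N) :=
  Finset.univ.filter (fun p => max k lo ≤ (p : ℕ) ∧ ∀ q : Fin N, q < p → π q < π p)

lemma selList_cons {N : ℕ} (π : Equiv.Perm (Fin N)) (k : ℕ) (ks : List ℕ) (lo : ℕ) :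
    selList π (k :: ks) lo = if h : (stage π k lo).Nonempty
      then (stage π k lo).min' h :: selList π ks (((stage π k lo).min' h : ℕ) + 1)
      else [] := rfl

lemma selList_of_le {N : ℕ} (π : Equiv.Perm (Fin N)) (l : List ℕ) (lo : ℕ) (h : N ≤ lo) :
    selList π l lo = [] := by
  cases l with
  | nil => rfl
  | cons k ks =>
    rw [selList_cons, dif_neg]
    rintro ⟨p, hp⟩
    simp only [stage, Finset.mem_filter] at hp
    have := p.isLt
    omega

lemma selList_length_le {N : ℕ} (π : Equiv.Perm (Fin N)) (l : List ℕ) (lo : ℕ) :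
    (selList π l lo).length ≤ l.length := by
  induction l generalizing lo with
  | nil => simp [selList]
  | cons k ks ih =>
    rw [selList_cons]
    split
    · simpa using ih _
    · simp

lemma selList_append_ge {N : ℕ} (π : Equiv.Perm (Fin N)) (l : List ℕ) (k' : ℕ) (lo : ℕ)
    (h : N ≤ k') : selList π (l ++ [k']) lo = selList π l lo := by
  induction l generalizing lo with
  | nil =>
    simp only [List.nil_append]
    rw [selList_cons, dif_neg]
    · rfl
    rintro ⟨p, hp⟩
    simp only [stage, Finset.mem_filter] at hp
    have := p.isLt
    omega
  | cons k ks ih =>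
    rw [List.cons_append, selList_cons, selList_cons]
    split
    · rw [ih]
    · rfl

lemma selList_append_length_le_iff {N : ℕ} (π : Equiv.Perm (Fin N)) (l : List ℕ) (k' : ℕ)
    (lo : ℕ) (j : ℤ) (hj : j < l.length) :
    (((selList π (l ++ [k']) lo).length : ℤ) ≤ j ↔ ((selList π l lo).length : ℤ) ≤ j) := by
  induction l generalizing lo j with
  | nil =>
    simp only [List.length_nil] at hj
    constructor <;> intro h <;> [skip; skip] <;>
      · exfalso; have : (0:ℤ) ≤ j → False := by omega
        omega
  | cons k ks ih =>
    rw [List.cons_append, selList_cons, selList_cons]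
    split
    · rename_i hne
      simp only [List.length_cons, Nat.cast_add, Nat.cast_one]
      have hj' : j - 1 < (ks.length : ℤ) := by
        simp only [List.length_cons] at hj; push_cast at hj ⊢; omega
      constructor
      · intro hle
        have := (ih (((stage π k lo).min' hne : ℕ) + 1) (j - 1) hj').mp (by omega)
        omega
      · intro hle
        have := (ih (((stage π k lo).min' hne : ℕ) + 1) (j - 1) hj').mpr (by omega)
        omega
    · simp

lemma mem_stage_castSucc (v : Fin (n+1)) (ρ : Equiv.Perm (Fin n)) (k lo : ℕ) (p : Fin n) :
    Fin.castSucc p ∈ stage (Fp v ρ) k lo ↔ p ∈ stage ρ k lo := by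
  simp only [stage, Finset.mem_filter, Finset.mem_univ, true_and, Fin.coe_castSucc]
  apply and_congr_right
  intro _
  constructor
  · intro h q hq
    have := h (Fin.castSucc q) (Fin.castSucc_lt_castSucc_iff.mpr hq)
    rw [Fp_castSucc, Fp_castSucc] at this
    exact Fin.succAbove_lt_succAbove_iff.mp this
  · intro h q hq
    have hqne : q ≠ Fin.last n := Fin.ne_last_of_lt (hq.trans (Fin.castSucc_lt_last p))
    have e : q = Fin.castSucc (q.castPred hqne) := (Fin.castSucc_castPred _ _).symm
    rw [e, Fp_castSucc, Fp_castSucc]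
    apply Fin.succAbove_lt_succAbove_iff.mpr
    apply h
    exact Fin.castSucc_lt_castSucc_iff.mp (e ▸ hq)

lemma last_not_mem_stage {v : Fin (n+1)} (hv : v ≠ Fin.last n) (ρ : Equiv.Perm (Fin n))
    (k lo : ℕ) : Fin.last n ∉ stage (Fp v ρ) k lo := by
  simp only [stage, Finset.mem_filter, Finset.mem_univ, true_and, not_and]
  intro _ hall
  set q := (Fp v ρ).symm (Fin.last n) with hqdef
  have hq : Fp v ρ q = Fin.last n := Equiv.apply_symm_apply _ _
  have hqlt : q < Fin.last n := by
    rw [Fin.lt_last_iff_ne_last]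
    intro hh
    rw [hh, Fp_last] at hq
    exact hv hq
  have := hall q hqlt
  rw [hq, Fp_last] at this
  exact absurd this (not_lt.mpr (Fin.le_last v))

lemma stage_min'_gen (v : Fin (n+1)) (ρ : Equiv.Perm (Fin n)) (k lo : ℕ)
    (h : (stage ρ k lo).Nonempty) (hne : (stage (Fp v ρ) k lo).Nonempty) :
    (stage (Fp v ρ) k lo).min' hne = Fin.castSucc ((stage ρ k lo).min' h) := by
  apply le_antisymm
  · exact Finset.min'_le _ _ ((mem_stage_castSucc v ρ k lo _).mpr (Finset.min'_mem _ h))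
  · apply Finset.le_min'
    intro y hy
    rcases eq_or_ne y (Fin.last n) with rfl | hylast
    · exact (Fin.castSucc_lt_last _).le
    · have e : y = Fin.castSucc (y.castPred hylast) := (Fin.castSucc_castPred _ _).symm
      rw [e, Fin.castSucc_le_castSucc_iff]
      exact Finset.min'_le _ _ ((mem_stage_castSucc v ρ k lo _).mp (e ▸ hy))

lemma stage_nonempty_iff {v : Fin (n+1)} (hv : v ≠ Fin.last n) (ρ : Equiv.Perm (Fin n))
    (k lo : ℕ) : (stage (Fp v ρ) k lo).Nonempty ↔ (stage ρ k lo).Nonempty := by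
  constructor
  · rintro ⟨x, hx⟩
    have hxne : x ≠ Fin.last n := by rintro rfl; exact last_not_mem_stage hv ρ k lo hx
    have e : x = Fin.castSucc (x.castPred hxne) := (Fin.castSucc_castPred _ _).symm
    exact ⟨x.castPred hxne, (mem_stage_castSucc v ρ k lo _).mp (e ▸ hx)⟩
  · rintro ⟨x, hx⟩
    exact ⟨Fin.castSucc x, (mem_stage_castSucc v ρ k lo _).mpr hx⟩

lemma last_mem_stage (ρ : Equiv.Perm (Fin n)) (k lo : ℕ) (hk : k ≤ n) (hlo : lo ≤ n) :
    Fin.last n ∈ stage (Fp (Fin.last n) ρ) k lo := by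
  simp only [stage, Finset.mem_filter, Finset.mem_univ, true_and, Fin.val_last]
  refine ⟨by omega, ?_⟩
  intro q hq
  rw [Fp_last, Fin.lt_last_iff_ne_last]
  intro heq
  have : q = Fin.last n := by
    apply (Fp (Fin.last n) ρ).injective
    rw [heq, Fp_last]
  exact absurd this (Fin.ne_last_of_lt hq)

lemma stage_eq_singleton (ρ : Equiv.Perm (Fin n)) (k lo : ℕ) (hk : k ≤ n) (hlo : lo ≤ n)
    (h : ¬(stage ρ k lo).Nonempty) :
    stage (Fp (Fin.last n) ρ) k lo = {Fin.last n} := by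
  apply Finset.eq_singleton_iff_unique_mem.mpr
  refine ⟨last_mem_stage ρ k lo hk hlo, ?_⟩
  intro y hy
  by_contra hyne
  have e : y = Fin.castSucc (y.castPred hyne) := (Fin.castSucc_castPred _ _).symm
  exact h ⟨y.castPred hyne, (mem_stage_castSucc _ ρ k lo _).mp (e ▸ hy)⟩

lemma selList_Fp_ne_last (v : Fin (n+1)) (ρ : Equiv.Perm (Fin n)) (hv : v ≠ Fin.last n)
    (l : List ℕ) (lo : ℕ) :
    selList (Fp v ρ) l lo = (selList ρ l lo).map Fin.castSucc := by
  induction l generalizing lo with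
  | nil => rfl
  | cons k ks ih =>
    rw [selList_cons, selList_cons]
    by_cases h : (stage ρ k lo).Nonempty
    · rw [dif_pos ((stage_nonempty_iff hv ρ k lo).mpr h), dif_pos h,
        stage_min'_gen v ρ k lo h]
      simp only [List.map_cons, Fin.coe_castSucc]
      rw [ih]
    · rw [dif_neg (fun hh => h ((stage_nonempty_iff hv ρ k lo).mp hh)), dif_neg h]
      rfl

lemma selList_Fp_last (ρ : Equiv.Perm (Fin n)) (l : List ℕ) (lo : ℕ)
    (hlo : lo ≤ n) (hl : ∀ k ∈ l, k ≤ n) :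
    selList (Fp (Fin.last n) ρ) l lo = (selList ρ l lo).map Fin.castSucc ++
      (if (selList ρ l lo).length < l.length then [Fin.last n] else []) := by
  induction l generalizing lo with
  | nil => simp [selList]
  | cons k ks ih =>
    have hk : k ≤ n := hl k (by simp)
    have hks : ∀ k' ∈ ks, k' ≤ n := fun k' h => hl k' (by simp [h])
    rw [selList_cons, selList_cons]
    by_cases h : (stage ρ k lo).Nonempty
    · have hne : (stage (Fp (Fin.last n) ρ) k lo).Nonempty :=
        ⟨_, (mem_stage_castSucc _ ρ k lo _).mpr (Finset.min'_mem _ h)⟩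
      rw [dif_pos hne, dif_pos h, stage_min'_gen _ ρ k lo h]
      have hmlt : ((stage ρ k lo).min' h : ℕ) + 1 ≤ n := ((stage ρ k lo).min' h).isLt
      simp only [Fin.coe_castSucc]
      rw [ih _ hmlt hks]
      simp only [List.map_cons, List.cons_append, List.length_cons, Nat.succ_lt_succ_iff]
    · have hsing := stage_eq_singleton ρ k lo hk hlo h
      have hne : (stage (Fp (Fin.last n) ρ) k lo).Nonempty := by
        rw [hsing]; exact ⟨_, Finset.mem_singleton_self _⟩
      rw [dif_pos hne, dif_neg h]
      have hmin : (stage (Fp (Fin.last n) ρ) k lo).min' hne = Fin.last n := by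
        simp only [hsing]
        exact Finset.min'_singleton _
      rw [hmin]
      rw [selList_of_le _ ks _ (by simp [Fin.val_last])]
      simp [selList]

lemma master (θ : ℝ) (n : ℕ) (ks : List ℕ) (kr : ℕ) (hks : ∀ k ∈ ks, k ≤ kr)
    (hkr : kr ≤ n) :
    Tle θ (n+1) (ks ++ [kr]) (ks.length : ℤ) =
      θ * mallowsP θ n * Tle θ n (ks ++ [kr]) (ks.length : ℤ)
        + Tle θ n ks ((ks.length : ℤ) - 1) := by
  have hbound : ∀ k ∈ ks ++ [kr], k ≤ n := by
    intro k hk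
    rcases List.mem_append.mp hk with h | h
    · exact (hks k h).trans hkr
    · simp only [List.mem_singleton] at h; omega
  rw [Tle, ← Fintype.sum_bijective _ Fp_bij _
      (fun π => if ((selList π (ks ++ [kr]) 0).length : ℤ) ≤ (ks.length : ℤ)
        then θ ^ inversions π else 0) (fun x => rfl),
    Fintype.sum_prod_type, Fin.sum_univ_castSucc]
  congr 1
  · -- v = castSucc v' part
    have hterm : ∀ (v' : Fin n) (ρ : Equiv.Perm (Fin n)),
        (if ((selList (Fp (Fin.castSucc v') ρ) (ks ++ [kr]) 0).length : ℤ) ≤ (ks.length : ℤ)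
          then θ ^ inversions (Fp (Fin.castSucc v') ρ) else 0)
        = θ ^ (n - (Fin.castSucc v' : ℕ)) *
          (if ((selList ρ (ks ++ [kr]) 0).length : ℤ) ≤ (ks.length : ℤ)
            then θ ^ inversions ρ else 0) := by
      intro v' ρ
      rw [selList_Fp_ne_last _ _ (Fin.ne_of_lt (Fin.castSucc_lt_last v')) _ _,
        List.length_map, inversions_Fp, pow_add, mul_ite, mul_zero]
    calc ∑ v' : Fin n, ∑ ρ : Equiv.Perm (Fin n),
          (if ((selList (Fp (Fin.castSucc v') ρ) (ks ++ [kr]) 0).length : ℤ) ≤ (ks.length : ℤ)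
            then θ ^ inversions (Fp (Fin.castSucc v') ρ) else 0)
        = ∑ v' : Fin n, θ ^ (n - (Fin.castSucc v' : ℕ)) * Tle θ n (ks ++ [kr]) (ks.length : ℤ) := by
          apply Finset.sum_congr rfl
          intro v' _
          rw [Finset.sum_congr rfl (fun ρ _ => hterm v' ρ), ← Finset.mul_sum, Tle]
      _ = θ * mallowsP θ n * Tle θ n (ks ++ [kr]) (ks.length : ℤ) := by
          rw [← Finset.sum_mul, sum_theta_cast]
  · -- v = last part
    have hcond : ∀ ρ : Equiv.Perm (Fin n),
        (((selList (Fp (Fin.last n) ρ) (ks ++ [kr]) 0).length : ℤ) ≤ (ks.length : ℤ)) ↔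
        (((selList ρ ks 0).length : ℤ) ≤ (ks.length : ℤ) - 1) := by
      intro ρ
      rw [selList_Fp_last ρ _ 0 (by omega) hbound, List.length_append, List.length_map]
      have h1 := selList_length_le ρ (ks ++ [kr]) 0
      rw [List.length_append, List.length_singleton] at h1
      rw [← selList_append_length_le_iff ρ ks kr 0 ((ks.length : ℤ) - 1)
        (by
          rcases ks with _ | ⟨a, l⟩
          · simp
          · simp only [List.length_cons]; push_cast; omega)]
      by_cases hc : (selList ρ (ks ++ [kr]) 0).length < (ks ++ [kr]).length
      · rw [if_pos hc]
        simp only [List.length_singleton]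
        push_cast
        omega
      · rw [if_neg hc]
        rw [List.length_append, List.length_singleton] at hc
        simp only [List.length_nil]
        push_cast
        omega
    apply Finset.sum_congr rfl
    intro ρ _
    show (if ((selList (Fp (Fin.last n) ρ) (ks ++ [kr]) 0).length : ℤ) ≤ (ks.length : ℤ)
      then θ ^ inversions (Fp (Fin.last n) ρ) else 0) = _
    rw [inversions_Fp, Fin.val_last, Nat.sub_self, zero_add,
      if_congr (hcond ρ) rfl rfl]

lemma Tle_all (θ : ℝ) (ks : List ℕ) (kr : ℕ) :
    Tle θ kr (ks ++ [kr]) (ks.length : ℤ) = mallowsPFact θ kr := by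
  rw [Tle, ← sum_perm_pow θ kr]
  apply Finset.sum_congr rfl
  intro ρ _
  rw [selList_append_ge ρ ks kr 0 le_rfl, if_pos]
  exact_mod_cast selList_length_le ρ ks 0

end Stmt8Aux

theorem stmt8 (θ : ℝ) (hθ : 0 < θ) (ks : List ℕ) (kr m : ℕ)
    (hsort : (ks ++ [kr]).Pairwise (· ≤ ·)) (hm : kr + 1 ≤ m) :
    Tle θ m (ks ++ [kr]) (ks.length : ℤ) =
      mallowsPFact θ (m - 1) * (θ ^ (m - kr) * mallowsP θ kr) +
        mallowsPFact θ (m - 1) *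
          ∑ i ∈ Finset.Ico kr m,
            (Tle θ i ks ((ks.length : ℤ) - 1) / mallowsPFact θ i) * θ ^ (m - 1 - i) := by
  have hks : ∀ k ∈ ks, k ≤ kr := by
    intro k hk
    exact (List.pairwise_append.mp hsort).2.2 k hk kr (by simp)
  induction m, hm using Nat.le_induction with
  | base =>
    rw [master θ kr ks kr hks le_rfl, Tle_all]
    simp only [Nat.add_sub_cancel, Nat.sub_self, pow_one,
      show kr + 1 - kr = 1 from by omega]
    rw [show Finset.Ico kr (kr + 1) = {kr} from by ext x; simp,
      Finset.sum_singleton]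
    rw [show kr - kr = 0 from by omega, pow_zero, mul_one]
    have h0 : mallowsPFact θ kr ≠ 0 := ne_of_gt (mallowsPFact_pos hθ kr)
    field_simp
  | succ m hm ih =>
    obtain ⟨m', rfl⟩ : ∃ m', m = m' + 1 := ⟨m - 1, by omega⟩
    have hkrm : kr ≤ m' := by omega
    rw [master θ (m' + 1) ks kr hks (by omega), ih]
    simp only [Nat.add_sub_cancel] at *
    have hF : mallowsPFact θ (m' + 1) = mallowsPFact θ m' * mallowsP θ (m' + 1) := by
      rw [mallowsPFact, Finset.prod_range_succ]; rfl
    have hS : (∑ i ∈ Finset.Ico kr (m' + 1 + 1),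
          (Tle θ i ks ((ks.length : ℤ) - 1) / mallowsPFact θ i) * θ ^ (m' + 1 - i))
        = θ * (∑ i ∈ Finset.Ico kr (m' + 1),
            (Tle θ i ks ((ks.length : ℤ) - 1) / mallowsPFact θ i) * θ ^ (m' - i))
          + Tle θ (m' + 1) ks ((ks.length : ℤ) - 1) / mallowsPFact θ (m' + 1) := by
      rw [Finset.sum_Ico_succ_top (by omega : kr ≤ m' + 1), Nat.sub_self, pow_zero, mul_one,
        Finset.mul_sum]
      congr 1
      apply Finset.sum_congr rfl
      intro i hi
      rw [Finset.mem_Ico] at hi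
      rw [show m' + 1 - i = (m' - i) + 1 from by omega, pow_succ]
      ring
    rw [hS, hF]
    have hE : θ ^ (m' + 1 + 1 - kr) = θ * θ ^ (m' + 1 - kr) := by
      rw [show m' + 1 + 1 - kr = (m' + 1 - kr) + 1 from by omega, pow_succ]
      ring
    rw [hE]
    have h0 : mallowsPFact θ m' * mallowsP θ (m' + 1) ≠ 0 := by
      rw [← hF]; exact ne_of_gt (mallowsPFact_pos hθ (m' + 1))
    have hP1 : mallowsP θ (m' + 1) ≠ 0 := ne_of_gt (mallowsP_pos hθ m')
    have hPF : mallowsPFact θ m' ≠ 0 := ne_of_gt (mallowsPFact_pos hθ m')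
    field_simp
    ring
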